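/- Let (T, E, F) be a solution of Model (1) on [0,∞) with nonnegative initial values. Then T(t) ≥ 0, E(t) ≥ 0 and F(t) ≥ 0 for all t ≥ 0. -/

import Mathlib

open Set Filter Real Topology

lemma model1aux_deriv_nonpos_of_left (g : ℝ → ℝ) (a x : ℝ) (hax : a < x)
    (hg : DifferentiableAt ℝ g x) (h : ∀ t ∈ Set.Ico a x, g x ≤ g t) :
    deriv g x ≤ 0 := by
  have hder : HasDerivWithinAt g (deriv g x) (Iio x) x :=
    hg.hasDerivAt.hasDerivWithinAt
  rw [hasDerivWithinAt_iff_tendsto_slope] at hder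
  have hs : Iio x \ {x} = Iio x := by
    ext t; simp [lt_iff_le_and_ne]
  rw [hs] at hder
  refine le_of_tendsto hder ?_
  filter_upwards [Ioo_mem_nhdsLT_of_mem (Set.mem_Ioc.2 ⟨hax, le_refl x⟩)] with t ht
  have h1 : g x ≤ g t := h t ⟨ht.1.le, ht.2⟩
  have h2 : t - x < 0 := sub_neg.2 ht.2
  rw [slope_def_field]
  exact div_nonpos_of_nonneg_of_nonpos (by linarith) h2.le

lemma model1aux_nonneg_left_lim (g : ℝ → ℝ) (hg : Continuous g) (s x : ℝ) (hsx : s < x)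
    (h : ∀ t ∈ Set.Ico s x, 0 ≤ g t) : 0 ≤ g x := by
  have ht : Tendsto g (𝓝[<] x) (𝓝 (g x)) :=
    (hg.continuousAt).continuousWithinAt.tendsto
  refine ge_of_tendsto ht ?_
  filter_upwards [Ioo_mem_nhdsLT_of_mem (Set.mem_Ioc.2 ⟨hsx, le_refl x⟩)] with t htt
  exact h t ⟨htt.1.le, htt.2⟩

set_option maxHeartbeats 2000000 in
lemma model1aux_local
    (k1 m1 r μ α a1 : ℝ)
    (hk1 : 0 ≤ k1) (hm1 : 0 ≤ m1) (hr : 0 ≤ r) (hμ : 0 ≤ μ) (hα : 0 ≤ α)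
    (ha1 : 0 < a1)
    (T E F : ℝ → ℝ)
    (hT : Differentiable ℝ T) (hE : Differentiable ℝ E) (hF : Differentiable ℝ F)
    (hT' : ∀ t ≥ (0:ℝ), deriv T t = (k1 * E t / (a1 + E t)) * T t * (1 - m1 * T t))
    (hE' : ∀ t ≥ (0:ℝ), deriv E t = r * F t - μ * E t)
    (hF' : ∀ t ≥ (0:ℝ), deriv F t = -(α * T t * F t))
    (s b : ℝ) (hs0 : 0 ≤ s) (hsb : s < b)
    (hTs : 0 ≤ T s) (hEs : 0 ≤ E s) (hFs : 0 ≤ F s)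
    (hEbd : ∀ t ∈ Set.Icc s b, -(a1/2) < E t) :
    ∀ t ∈ Set.Icc s b, 0 ≤ T t ∧ 0 ≤ E t ∧ 0 ≤ F t := by
  -- bound C on |T| and |E| on [s,b]
  obtain ⟨C0, hC0⟩ := (isCompact_Icc (a := s) (b := b)).exists_bound_of_continuousOn
    (f := fun t => |T t| + |E t|)
    (((hT.continuous.abs).add (hE.continuous.abs)).continuousOn)
  obtain ⟨C, hCeq⟩ : ∃ C : ℝ, C = max C0 0 := ⟨_, rfl⟩
  have hC : 0 ≤ C := hCeq ▸ le_max_right _ _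
  have hTC : ∀ t ∈ Set.Icc s b, |T t| ≤ C := by
    intro t ht
    have := hC0 t ht
    have h2 : |T t| + |E t| ≤ C0 := le_trans (le_abs_self _) (by simpa using this)
    have : |E t| ≥ 0 := abs_nonneg _
    exact le_trans (by linarith) (hCeq ▸ le_max_left C0 0)
  have hEC : ∀ t ∈ Set.Icc s b, |E t| ≤ C := by
    intro t ht
    have := hC0 t ht
    have h2 : |T t| + |E t| ≤ C0 := le_trans (le_abs_self _) (by simpa using this)
    have : |T t| ≥ 0 := abs_nonneg _
    exact le_trans (by linarith) (hCeq ▸ le_max_left C0 0)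
  obtain ⟨M1, hM1def⟩ : ∃ M1 : ℝ, M1 = k1 * C * (2 / a1) * (1 + m1 * C) := ⟨_, rfl⟩
  have hM1 : 0 ≤ M1 := by rw [hM1def]; positivity
  obtain ⟨K, hK, hKM, hKr, hKα⟩ :
      ∃ K : ℝ, 0 < K ∧ M1 + 1 ≤ K ∧ r + 1 ≤ K ∧ α * C + 1 ≤ K := by
    refine ⟨M1 + α * C + r + μ + 1, by positivity, ?_, ?_, ?_⟩ <;>
      nlinarith [mul_nonneg hα hC]
  -- the ε-barrier claim
  have key : ∀ ε > (0:ℝ), ∀ t ∈ Set.Icc s b,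
      -(ε * exp (K * t)) < T t ∧ -(ε * exp (K * t)) < E t ∧ -(ε * exp (K * t)) < F t := by
    intro ε hε
    obtain ⟨φ, hφdef⟩ : ∃ φ : ℝ → ℝ, φ = fun t => ε * exp (K * t) := ⟨_, rfl⟩
    have hφs : ∀ t, φ t = ε * exp (K * t) := fun t => by rw [hφdef]
    have hφc : Continuous φ := by rw [hφdef]; fun_prop
    have hφpos : ∀ t, 0 < φ t := fun t => by rw [hφs t]; positivity
    have hφd : ∀ x : ℝ, HasDerivAt φ (ε * (exp (K * x) * K)) x := by
      intro x
      have h1 : HasDerivAt (fun t : ℝ => K * t) K x := by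
        simpa using (hasDerivAt_id x).const_mul K
      rw [hφdef]
      exact (h1.exp).const_mul ε
    obtain ⟨B, hBdef⟩ : ∃ B : Set ℝ, B = Set.Icc s b ∩
      ((fun t => T t + φ t) ⁻¹' Set.Iic 0 ∪ (fun t => E t + φ t) ⁻¹' Set.Iic 0 ∪
        (fun t => F t + φ t) ⁻¹' Set.Iic 0) := ⟨_, rfl⟩
    have hBclosed : IsClosed B := by
      rw [hBdef]
      refine isClosed_Icc.inter (IsClosed.union (IsClosed.union ?_ ?_) ?_)
      · exact isClosed_Iic.preimage (hT.continuous.add hφc)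
      · exact isClosed_Iic.preimage (hE.continuous.add hφc)
      · exact isClosed_Iic.preimage (hF.continuous.add hφc)
    have hBbdd : BddBelow B := ⟨s, fun t ht => (hBdef ▸ ht).1.1⟩
    have hBempty : ¬ B.Nonempty := by
      rintro hne
      set x := sInf B with hxdef
      have hxB : x ∈ Set.Icc s b ∩
          ((fun t => T t + φ t) ⁻¹' Set.Iic 0 ∪ (fun t => E t + φ t) ⁻¹' Set.Iic 0 ∪
            (fun t => F t + φ t) ⁻¹' Set.Iic 0) :=
        hBdef ▸ hBclosed.csInf_mem hne hBbdd
      have hxIcc : x ∈ Set.Icc s b := hxB.1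
      have hx0 : (0:ℝ) ≤ x := le_trans hs0 hxIcc.1
      have hsx : s < x := by
        rcases lt_or_eq_of_le hxIcc.1 with h | h
        · exact h
        · exfalso
          have hm := hxB.2
          rw [← h] at hm
          simp only [Set.mem_union, Set.mem_preimage, Set.mem_Iic] at hm
          have := hφpos s
          rcases hm with (h1 | h1) | h1 <;>
            first
            | linarith [hTs] | linarith [hEs] | linarith [hFs]
      have hlow : ∀ t ∈ Set.Ico s x,
          0 < T t + φ t ∧ 0 < E t + φ t ∧ 0 < F t + φ t := by
        intro t ht
        have htB : t ∉ B := fun hB => absurd (csInf_le hBbdd hB) (not_le.2 ht.2)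
        have htIcc : t ∈ Set.Icc s b := ⟨ht.1, le_trans ht.2.le hxIcc.2⟩
        simp only [hBdef, Set.mem_inter_iff, Set.mem_union, Set.mem_preimage,
          Set.mem_Iic, not_and, not_or, not_le] at htB
        obtain ⟨⟨h1, h2⟩, h3⟩ := htB htIcc
        exact ⟨h1, h2, h3⟩
      -- left limits: all components ≥ -φ at x
      have hTx : 0 ≤ T x + φ x :=
        model1aux_nonneg_left_lim _ (hT.continuous.add hφc) s x hsx
          (fun t ht => (hlow t ht).1.le)
      have hEx : 0 ≤ E x + φ x :=
        model1aux_nonneg_left_lim _ (hE.continuous.add hφc) s x hsx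
          (fun t ht => (hlow t ht).2.1.le)
      have hFx : 0 ≤ F x + φ x :=
        model1aux_nonneg_left_lim _ (hF.continuous.add hφc) s x hsx
          (fun t ht => (hlow t ht).2.2.le)
      -- bounds at x
      have hTCx : |T x| ≤ C := hTC x hxIcc
      have hECx : |E x| ≤ C := hEC x hxIcc
      have hden : a1 / 2 < a1 + E x := by have := hEbd x hxIcc; linarith
      have hdenpos : 0 < a1 + E x := by linarith
      have hφx : 0 < φ x := hφpos x
      -- whichever component crosses has deriv contradiction
      have hm := hxB.2
      simp only [Set.mem_union, Set.mem_preimage, Set.mem_Iic] at hm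
      rcases hm with (hcross | hcross) | hcross
      · -- T crosses
        have heq : T x + φ x = 0 := le_antisymm hcross hTx
        have hTxval : T x = -φ x := by linarith
        have hderiv : deriv (fun t => T t + φ t) x =
            deriv T x + ε * (exp (K * x) * K) :=
          (((hT x).hasDerivAt).add (hφd x)).deriv
        have hq : |k1 * E x / (a1 + E x) * (1 - m1 * T x)| ≤ M1 := by
          rw [abs_mul, abs_div, abs_mul, abs_of_nonneg hk1, abs_of_pos hdenpos]
          have h1 : k1 * |E x| / (a1 + E x) ≤ k1 * C / (a1 / 2) := by
            apply div_le_div₀ (by positivity) (by nlinarith) (by linarith) hden.le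
          have h2 : |1 - m1 * T x| ≤ 1 + m1 * C := by
            calc |1 - m1 * T x| ≤ |(1:ℝ)| + |m1 * T x| := abs_sub _ _
              _ = 1 + m1 * |T x| := by rw [abs_one, abs_mul, abs_of_nonneg hm1]
              _ ≤ 1 + m1 * C := by nlinarith
          calc k1 * |E x| / (a1 + E x) * |1 - m1 * T x|
              ≤ (k1 * C / (a1 / 2)) * (1 + m1 * C) := by
                apply mul_le_mul h1 h2 (abs_nonneg _) (by positivity)
            _ = M1 := by rw [hM1def]; field_simp
        have hφxeq : φ x = ε * exp (K * x) := hφs x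
        rw [hTxval, hφxeq] at hq
        have hqle := abs_le.1 hq
        have hdT : deriv T x = (k1 * E x / (a1 + E x) * (1 - m1 * T x)) * T x := by
          rw [hT' x hx0]; ring
        have hpos : 0 < deriv (fun t => T t + φ t) x := by
          rw [hderiv, hdT, hTxval, hφxeq]
          nlinarith [mul_pos hε (exp_pos (K * x)), hqle.1, hqle.2, hKM]
        have hnonpos : deriv (fun t => T t + φ t) x ≤ 0 := by
          apply model1aux_deriv_nonpos_of_left _ s x hsx
            ((hT x).add (hφd x).differentiableAt)
          intro t ht
          simp only [Pi.add_apply]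
          rw [heq]
          exact (hlow t ht).1.le
        linarith
      · -- E crosses
        have heq : E x + φ x = 0 := le_antisymm hcross hEx
        have hExval : E x = -φ x := by linarith
        have hderiv : deriv (fun t => E t + φ t) x =
            deriv E x + ε * (exp (K * x) * K) :=
          (((hE x).hasDerivAt).add (hφd x)).deriv
        have hφxeq : φ x = ε * exp (K * x) := hφs x
        have hpos : 0 < deriv (fun t => E t + φ t) x := by
          rw [hderiv, hE' x hx0, hExval, hφxeq]
          nlinarith [mul_pos hε (exp_pos (K * x)),
            mul_nonneg hr (show (0:ℝ) ≤ F x + ε * exp (K * x) by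
              rw [← hφxeq]; linarith),
            mul_nonneg hμ (mul_pos hε (exp_pos (K * x))).le, hKr]
        have hnonpos : deriv (fun t => E t + φ t) x ≤ 0 := by
          apply model1aux_deriv_nonpos_of_left _ s x hsx
            ((hE x).add (hφd x).differentiableAt)
          intro t ht
          simp only [Pi.add_apply]
          rw [heq]
          exact (hlow t ht).2.1.le
        linarith
      · -- F crosses
        have heq : F x + φ x = 0 := le_antisymm hcross hFx
        have hFxval : F x = -φ x := by linarith
        have hderiv : deriv (fun t => F t + φ t) x =
            deriv F x + ε * (exp (K * x) * K) :=
          (((hF x).hasDerivAt).add (hφd x)).deriv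
        have hTge := abs_le.1 hTCx
        have hφxeq : φ x = ε * exp (K * x) := hφs x
        have hpos : 0 < deriv (fun t => F t + φ t) x := by
          rw [hderiv, hF' x hx0, hFxval, hφxeq]
          nlinarith [mul_pos hε (exp_pos (K * x)), hKα,
            mul_nonneg (mul_nonneg hα (show (0:ℝ) ≤ T x + C by linarith [hTge.1]))
              (mul_pos hε (exp_pos (K * x))).le]
        have hnonpos : deriv (fun t => F t + φ t) x ≤ 0 := by
          apply model1aux_deriv_nonpos_of_left _ s x hsx
            ((hF x).add (hφd x).differentiableAt)
          intro t ht
          simp only [Pi.add_apply]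
          rw [heq]
          exact (hlow t ht).2.2.le
        linarith
    -- from emptiness, conclude strict bounds
    intro t ht
    have htB : t ∉ B := fun h => hBempty ⟨t, h⟩
    simp only [hBdef, Set.mem_inter_iff, Set.mem_union, Set.mem_preimage,
      Set.mem_Iic, not_and, not_or, not_le] at htB
    obtain ⟨⟨h1, h2⟩, h3⟩ := htB ht
    rw [hφs t] at h1 h2 h3
    exact ⟨by linarith, by linarith, by linarith⟩
  -- let ε → 0
  intro t ht
  have hexp : 0 < exp (K * t) := exp_pos _
  refine ⟨?_, ?_, ?_⟩
  all_goals
    by_contra hneg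
    push_neg at hneg
  · have hε : 0 < -T t / (2 * exp (K * t)) := div_pos (by linarith) (by positivity)
    have := (key _ hε t ht).1
    have heq : -(-T t / (2 * exp (K * t)) * exp (K * t)) = T t / 2 := by
      field_simp
    rw [heq] at this
    linarith
  · have hε : 0 < -E t / (2 * exp (K * t)) := div_pos (by linarith) (by positivity)
    have := (key _ hε t ht).2.1
    have heq : -(-E t / (2 * exp (K * t)) * exp (K * t)) = E t / 2 := by
      field_simp
    rw [heq] at this
    linarith
  · have hε : 0 < -F t / (2 * exp (K * t)) := div_pos (by linarith) (by positivity)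
    have := (key _ hε t ht).2.2
    have heq : -(-F t / (2 * exp (K * t)) * exp (K * t)) = F t / 2 := by
      field_simp
    rw [heq] at this
    linarith

/-- Nonnegativity part of Proposition 1: a solution of Model (1) on [0,∞)
with nonnegative initial values stays nonnegative. -/
theorem model1_nonneg
    (k1 m1 r μ α a1 : ℝ)
    (hk1 : 0 ≤ k1) (hm1 : 0 ≤ m1) (hr : 0 ≤ r) (hμ : 0 ≤ μ) (hα : 0 ≤ α)
    (ha1 : 0 < a1)
    (T E F : ℝ → ℝ)
    (hT : Differentiable ℝ T) (hE : Differentiable ℝ E) (hF : Differentiable ℝ F)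
    (hT' : ∀ t ≥ (0:ℝ), deriv T t = (k1 * E t / (a1 + E t)) * T t * (1 - m1 * T t))
    (hE' : ∀ t ≥ (0:ℝ), deriv E t = r * F t - μ * E t)
    (hF' : ∀ t ≥ (0:ℝ), deriv F t = -(α * T t * F t))
    (hT0 : 0 ≤ T 0) (hE0 : 0 ≤ E 0) (hF0 : 0 ≤ F 0) :
    ∀ t ≥ (0:ℝ), 0 ≤ T t ∧ 0 ≤ E t ∧ 0 ≤ F t := by
  intro t1 ht1
  obtain ⟨S, hSdef⟩ : ∃ S : Set ℝ, S = {t : ℝ | t ∈ Set.Icc 0 t1 ∧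
      ∀ u ∈ Set.Icc 0 t, 0 ≤ T u ∧ 0 ≤ E u ∧ 0 ≤ F u} := ⟨_, rfl⟩
  have hS0 : (0:ℝ) ∈ S := by
    rw [hSdef]
    refine ⟨⟨le_refl 0, ht1⟩, fun u hu => ?_⟩
    have : u = 0 := le_antisymm hu.2 hu.1
    subst this
    exact ⟨hT0, hE0, hF0⟩
  have hbdd : BddAbove S := ⟨t1, fun t ht => ((hSdef ▸ ht).1).2⟩
  have hne : S.Nonempty := ⟨0, hS0⟩
  set s := sSup S with hsdef
  have hs0 : 0 ≤ s := le_csSup hbdd hS0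
  have hst1 : s ≤ t1 := csSup_le hne (fun t ht => ((hSdef ▸ ht).1).2)
  have hlt' : ∀ u, 0 ≤ u → u < s → 0 ≤ T u ∧ 0 ≤ E u ∧ 0 ≤ F u := by
    intro u h0 hus
    obtain ⟨v, hvS, huv⟩ := exists_lt_of_lt_csSup hne hus
    exact (hSdef ▸ hvS).2 u ⟨h0, huv.le⟩
  have hnonnegs : ∀ u ∈ Set.Icc (0:ℝ) s, 0 ≤ T u ∧ 0 ≤ E u ∧ 0 ≤ F u := by
    intro u hu
    rcases lt_or_eq_of_le hu.2 with hlt | heq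
    · exact hlt' u hu.1 hlt
    · rcases lt_or_eq_of_le hu.1 with h0 | h0
      · refine ⟨?_, ?_, ?_⟩
        · exact model1aux_nonneg_left_lim T hT.continuous 0 u h0
            (fun t ht => (hlt' t ht.1 (heq ▸ ht.2)).1)
        · exact model1aux_nonneg_left_lim E hE.continuous 0 u h0
            (fun t ht => (hlt' t ht.1 (heq ▸ ht.2)).2.1)
        · exact model1aux_nonneg_left_lim F hF.continuous 0 u h0
            (fun t ht => (hlt' t ht.1 (heq ▸ ht.2)).2.2)
      · rw [← h0]
        exact ⟨hT0, hE0, hF0⟩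
  rcases lt_or_eq_of_le hst1 with hlt | heq
  swap
  · exact hnonnegs t1 ⟨ht1, heq.ge⟩
  -- extension: contradiction with s = sSup S
  exfalso
  have hEs : 0 ≤ E s := (hnonnegs s ⟨hs0, le_refl s⟩).2.1
  have hU : IsOpen {t : ℝ | -(a1/2) < E t} := isOpen_lt continuous_const hE.continuous
  have hsU : s ∈ {t : ℝ | -(a1/2) < E t} := by
    simp only [Set.mem_setOf_eq]; linarith
  obtain ⟨δ, hδ, hball⟩ := Metric.isOpen_iff.1 hU s hsU
  obtain ⟨b, hbdef⟩ : ∃ b : ℝ, b = min (s + δ/2) t1 := ⟨_, rfl⟩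
  have hsb : s < b := by
    rw [hbdef]
    exact lt_min (by linarith) hlt
  have hbt1 : b ≤ t1 := hbdef ▸ min_le_right _ _
  have hbE : ∀ t ∈ Set.Icc s b, -(a1/2) < E t := by
    intro t ht
    have h1 : t - s < δ := by
      have h3 : b ≤ s + δ/2 := hbdef ▸ min_le_left _ _
      have := ht.2
      linarith
    have h2 : 0 ≤ t - s := by linarith [ht.1]
    have : t ∈ Metric.ball s δ := by
      rw [Metric.mem_ball, Real.dist_eq, abs_of_nonneg h2]
      exact h1
    exact hball this
  have hext := model1aux_local k1 m1 r μ α a1 hk1 hm1 hr hμ hα ha1 T E F hT hE hF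
    hT' hE' hF' s b hs0 hsb (hnonnegs s ⟨hs0, le_refl s⟩).1 hEs
    (hnonnegs s ⟨hs0, le_refl s⟩).2.2 hbE
  have hbS : b ∈ S := by
    rw [hSdef]
    refine ⟨⟨by linarith, hbt1⟩, fun u hu => ?_⟩
    rcases le_or_gt u s with h | h
    · exact hnonnegs u ⟨hu.1, h⟩
    · exact hext u ⟨h.le, hu.2⟩
  have : b ≤ s := le_csSup hbdd hbS
  linarith
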